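/- Let p(x) = Σ_{i=1}^d c_i x^i be a real polynomial with p(0) = 0, and write p₊(x) = Σ_{c_i>0} c_i x^i and p₋(x) = −Σ_{c_i<0} c_i x^i. Let A be an n×n symmetric positive semidefinite matrix. Then λ_min(p*[A]) ≥ p₊(λ_min(A)) − p₋(λ_max(A)) + min_i (a_{ii} − p(a_{ii})), where p*[A] applies p to off-diagonal entries and leaves the diagonal unchanged. -/

import Mathlib

/-- `f*[A]`: apply `f` to off-diagonal entries, leave diagonal unchanged. -/
def offDiagApply {n : ℕ} (f : ℝ → ℝ) (A : Matrix (Fin n) (Fin n) ℝ) :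
    Matrix (Fin n) (Fin n) ℝ :=
  Matrix.of fun i j => if i = j then A i i else f (A i j)

/-- The "positive part" `p₊(x) = ∑_{cᵢ > 0} cᵢ xⁱ` of a polynomial. -/
noncomputable def polyPosPart (p : Polynomial ℝ) (x : ℝ) : ℝ :=
  ∑ i ∈ p.support, if 0 < p.coeff i then p.coeff i * x ^ i else 0

/-- The "negative part" `p₋(x) = −∑_{cᵢ < 0} cᵢ xⁱ` of a polynomial. -/
noncomputable def polyNegPart (p : Polynomial ℝ) (x : ℝ) : ℝ :=
  -∑ i ∈ p.support, if p.coeff i < 0 then p.coeff i * x ^ i else 0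


open Matrix Finset

section Helpers
variable {n : ℕ}

/-- Entrywise (Hadamard) power of a matrix. -/
def hadPow (A : Matrix (Fin n) (Fin n) ℝ) (i : ℕ) : Matrix (Fin n) (Fin n) ℝ :=
  Matrix.of fun j k => A j k ^ i



lemma herm_entry {M : Matrix (Fin n) (Fin n) ℝ} (h : M.IsHermitian) (j k : Fin n) :
    M k j = M j k := by
  have := congrFun (congrFun h j) k
  simpa [Matrix.conjTranspose_apply] using this

/-- Schur product theorem (real case). -/
lemma schurProd {A B : Matrix (Fin n) (Fin n) ℝ} (hA : A.PosSemidef) (hB : B.PosSemidef) :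
    (Matrix.of fun j k => A j k * B j k).PosSemidef := by
  obtain ⟨C, hC⟩ : ∃ C : Matrix (Fin n) (Fin n) ℝ, B = Cᴴ * C := by
    open scoped MatrixOrder in exact CStarAlgebra.nonneg_iff_eq_star_mul_self.mp hB.nonneg
  refine Matrix.PosSemidef.of_dotProduct_mulVec_nonneg ?_ ?_
  · ext j k
    simp only [Matrix.conjTranspose_apply, Matrix.of_apply, star_trivial]
    rw [herm_entry hA.1, herm_entry hB.1]
  · intro x
    have key : (star x) ⬝ᵥ (Matrix.of fun j k => A j k * B j k) *ᵥ x
        = ∑ l, ((fun j => x j * C l j) ⬝ᵥ A *ᵥ (fun j => x j * C l j)) := by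
      simp only [dotProduct, mulVec, Matrix.of_apply, star_trivial, hC,
        Matrix.mul_apply, Matrix.conjTranspose_apply, Finset.mul_sum, Finset.sum_mul]
      conv_rhs => rw [Finset.sum_comm]
      refine Finset.sum_congr rfl fun j _ => ?_
      conv_rhs => rw [Finset.sum_comm]
      exact Finset.sum_congr rfl fun k _ => Finset.sum_congr rfl fun l _ => by ring
    rw [key]
    exact Finset.sum_nonneg fun l _ => by simpa using hA.dotProduct_mulVec_nonneg (fun j => x j * C l j)

lemma psd_diag_nonneg {M : Matrix (Fin n) (Fin n) ℝ} (hM : M.PosSemidef) (j : Fin n) :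
    0 ≤ M j j := by
  have := hM.dotProduct_mulVec_nonneg (Pi.single j 1)
  simpa [mulVec, dotProduct, Pi.single_apply] using this

lemma shift_eq {A : Matrix (Fin n) (Fin n) ℝ} (hA : A.IsHermitian) (c : ℝ) :
    A - c • 1 = (hA.eigenvectorUnitary : Matrix (Fin n) (Fin n) ℝ) *
      Matrix.diagonal (fun j => hA.eigenvalues j - c) *
      (hA.eigenvectorUnitary : Matrix (Fin n) (Fin n) ℝ)ᴴ := by
  have hU : (hA.eigenvectorUnitary : Matrix (Fin n) (Fin n) ℝ) *
      star (hA.eigenvectorUnitary : Matrix (Fin n) (Fin n) ℝ) = 1 :=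
    Matrix.mem_unitaryGroup_iff.mp hA.eigenvectorUnitary.2
  have hdiag : Matrix.diagonal (fun j => hA.eigenvalues j - c)
      = Matrix.diagonal (RCLike.ofReal ∘ hA.eigenvalues) - c • (1 : Matrix (Fin n) (Fin n) ℝ) := by
    ext j k
    by_cases h : j = k <;> simp [h, Matrix.diagonal_apply, Matrix.one_apply]
  rw [hdiag, Matrix.mul_sub, Matrix.sub_mul]
  congr 1
  · rw [← Matrix.star_eq_conjTranspose, ← Unitary.conjStarAlgAut_apply (S := ℝ), ← hA.spectral_theorem]
  · rw [Matrix.mul_smul, Matrix.mul_one, Matrix.smul_mul, ← Matrix.star_eq_conjTranspose, hU]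

lemma shift_eq' {A : Matrix (Fin n) (Fin n) ℝ} (hA : A.IsHermitian) (c : ℝ) :
    c • 1 - A = (hA.eigenvectorUnitary : Matrix (Fin n) (Fin n) ℝ) *
      Matrix.diagonal (fun j => c - hA.eigenvalues j) *
      (hA.eigenvectorUnitary : Matrix (Fin n) (Fin n) ℝ)ᴴ := by
  have h2 : Matrix.diagonal (fun j => c - hA.eigenvalues j)
      = -Matrix.diagonal (fun j => hA.eigenvalues j - c) := by
    have : (fun j => c - hA.eigenvalues j) = fun j => -(hA.eigenvalues j - c) := by
      funext j; ring
    rw [this, Matrix.diagonal_neg]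
  rw [h2, Matrix.mul_neg, Matrix.neg_mul, ← shift_eq hA c, neg_sub]

lemma psd_sub_smul {A : Matrix (Fin n) (Fin n) ℝ} (hA : A.IsHermitian) {c : ℝ}
    (h : ∀ j, c ≤ hA.eigenvalues j) : (A - c • 1).PosSemidef := by
  rw [shift_eq hA c]
  exact (Matrix.posSemidef_diagonal_iff.mpr fun j => sub_nonneg.mpr (h j)).mul_mul_conjTranspose_same _

lemma psd_smul_sub {A : Matrix (Fin n) (Fin n) ℝ} (hA : A.IsHermitian) {c : ℝ}
    (h : ∀ j, hA.eigenvalues j ≤ c) : (c • 1 - A).PosSemidef := by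
  rw [shift_eq' hA c]
  exact (Matrix.posSemidef_diagonal_iff.mpr fun j => sub_nonneg.mpr (h j)).mul_mul_conjTranspose_same _

lemma psd_smul {M : Matrix (Fin n) (Fin n) ℝ} (hM : M.PosSemidef) {c : ℝ} (hc : 0 ≤ c) :
    (c • M).PosSemidef := by
  refine Matrix.PosSemidef.of_dotProduct_mulVec_nonneg ?_ ?_
  · ext j k
    simp only [Matrix.conjTranspose_apply, Matrix.smul_apply, star_trivial, smul_eq_mul]
    rw [herm_entry hM.1]
  · intro x
    have := hM.dotProduct_mulVec_nonneg x
    simp only [Matrix.smul_mulVec, dotProduct_smul, smul_eq_mul]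
    exact mul_nonneg hc this

lemma hadPow_psd {A : Matrix (Fin n) (Fin n) ℝ} (hA : A.PosSemidef) (i : ℕ) :
    (hadPow A i).PosSemidef := by
  induction i with
  | zero =>
    refine Matrix.PosSemidef.of_dotProduct_mulVec_nonneg ?_ ?_
    · ext j k
      simp [hadPow]
    · intro x
      have : star x ⬝ᵥ (hadPow A 0) *ᵥ x = (∑ j, x j) * (∑ j, x j) := by
        simp [hadPow, dotProduct, mulVec, Finset.sum_mul, mul_comm]
      rw [this]
      exact mul_self_nonneg _
  | succ i ih =>
    have : hadPow A (i + 1) = Matrix.of fun j k => A j k * (hadPow A i) j k := by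
      ext j k
      simp [hadPow, pow_succ]
      ring
    rw [this]
    exact schurProd hA ih

lemma hadPow_lower {A : Matrix (Fin n) (Fin n) ℝ} (hA : A.PosSemidef) {m : ℝ} (hm : 0 ≤ m)
    (h1 : (A - m • 1).PosSemidef) (hdiag : ∀ j, m ≤ A j j) :
    ∀ i, 1 ≤ i → (hadPow A i - m ^ i • 1).PosSemidef := by
  intro i hi
  induction i, hi using Nat.le_induction with
  | base =>
    have : hadPow A 1 - m ^ 1 • 1 = A - m • 1 := by
      ext j k
      simp [hadPow]
    rw [this]
    exact h1
  | succ i hi ih =>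
    have key : hadPow A (i + 1) - m ^ (i + 1) • 1 =
        (Matrix.of fun j k => (A - m • 1) j k * (hadPow A i) j k) +
        Matrix.diagonal (fun j => m * (A j j ^ i - m ^ i)) := by
      ext j k
      by_cases h : j = k
      · subst h
        simp [hadPow, Matrix.sub_apply, Matrix.smul_apply, Matrix.one_apply,
          Matrix.diagonal_apply, pow_succ]
        ring
      · simp [hadPow, Matrix.sub_apply, Matrix.smul_apply, Matrix.one_apply, h,
          Matrix.diagonal_apply, pow_succ]
        ring
    rw [key]
    refine (schurProd h1 (hadPow_psd hA i)).add (Matrix.posSemidef_diagonal_iff.mpr fun j => ?_)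
    exact mul_nonneg hm (sub_nonneg.mpr (pow_le_pow_left₀ hm (hdiag j) i))

lemma hadPow_upper {A : Matrix (Fin n) (Fin n) ℝ} (hA : A.PosSemidef) {M : ℝ} (hM : 0 ≤ M)
    (h1 : (M • 1 - A).PosSemidef) (hdiag : ∀ j, A j j ≤ M) (hd0 : ∀ j, 0 ≤ A j j) :
    ∀ i, 1 ≤ i → (M ^ i • 1 - hadPow A i).PosSemidef := by
  intro i hi
  induction i, hi using Nat.le_induction with
  | base =>
    have : M ^ 1 • (1 : Matrix (Fin n) (Fin n) ℝ) - hadPow A 1 = M • 1 - A := by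
      ext j k
      simp [hadPow]
    rw [this]
    exact h1
  | succ i hi ih =>
    have key : M ^ (i + 1) • (1 : Matrix (Fin n) (Fin n) ℝ) - hadPow A (i + 1) =
        (Matrix.of fun j k => (M • 1 - A) j k * (hadPow A i) j k) +
        Matrix.diagonal (fun j => M * (M ^ i - A j j ^ i)) := by
      ext j k
      by_cases h : j = k
      · subst h
        simp [hadPow, Matrix.sub_apply, Matrix.smul_apply, Matrix.one_apply,
          Matrix.diagonal_apply, pow_succ]
        ring
      · simp [hadPow, Matrix.sub_apply, Matrix.smul_apply, Matrix.one_apply, h,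
          Matrix.diagonal_apply, pow_succ]
        ring
    rw [key]
    refine (schurProd h1 (hadPow_psd hA i)).add (Matrix.posSemidef_diagonal_iff.mpr fun j => ?_)
    exact mul_nonneg hM (sub_nonneg.mpr (pow_le_pow_left₀ (hd0 j) (hdiag j) i))

lemma psd_sum {ι : Type*} {s : Finset ι} {f : ι → Matrix (Fin n) (Fin n) ℝ}
    (h : ∀ i ∈ s, (f i).PosSemidef) : (∑ i ∈ s, f i).PosSemidef :=
  Finset.sum_induction f _ (fun _ _ ha hb => ha.add hb) Matrix.PosSemidef.zero h

lemma eig_ge_of_psd {S : Matrix (Fin n) (Fin n) ℝ} (hS : S.IsHermitian) {c : ℝ}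
    (h : (S - c • 1).PosSemidef) (i : Fin n) : c ≤ hS.eigenvalues i := by
  set v : Fin n → ℝ := ⇑(hS.eigenvectorBasis i) with hv_def
  have hv : S *ᵥ v = hS.eigenvalues i • v := hS.mulVec_eigenvectorBasis i
  have hnorm : v ⬝ᵥ v = 1 := by
    have h1 : ‖hS.eigenvectorBasis i‖ = 1 := hS.eigenvectorBasis.orthonormal.1 i
    have h2 : (inner ℝ (hS.eigenvectorBasis i) (hS.eigenvectorBasis i) : ℝ) = 1 := by
      rw [real_inner_self_eq_norm_mul_norm, h1, one_mul]
    rw [← h2, EuclideanSpace.inner_eq_star_dotProduct]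
    simp [v]
  have h0 := h.dotProduct_mulVec_nonneg v
  have heq : star v ⬝ᵥ (S - c • 1) *ᵥ v = hS.eigenvalues i - c := by
    rw [Matrix.sub_mulVec, hv, Matrix.smul_mulVec, Matrix.one_mulVec]
    simp only [star_trivial, dotProduct_sub, dotProduct_smul, smul_eq_mul, hnorm, mul_one]
  rw [heq] at h0
  linarith

end Helpers

theorem stmt_15 (n : ℕ) [NeZero n] (p : Polynomial ℝ) (hp0 : p.coeff 0 = 0)
    (A : Matrix (Fin n) (Fin n) ℝ) (hA : A.PosSemidef)
    (hS : (offDiagApply p.eval A).IsHermitian) :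
    ∀ i, polyPosPart p (⨅ j, hA.isHermitian.eigenvalues j) -
        polyNegPart p (⨆ j, hA.isHermitian.eigenvalues j) +
        (⨅ j, A j j - p.eval (A j j)) ≤ hS.eigenvalues i := by
  intro i
  haveI : Nonempty (Fin n) := ⟨⟨0, Nat.pos_of_ne_zero (NeZero.ne n)⟩⟩
  set m := ⨅ j, hA.isHermitian.eigenvalues j with hm_def
  set Mx := ⨆ j, hA.isHermitian.eigenvalues j with hMx_def
  set δ := ⨅ j, A j j - p.eval (A j j) with hδ_def
  have hm_le : ∀ j, m ≤ hA.isHermitian.eigenvalues j :=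
    fun j => ciInf_le (Set.Finite.bddBelow (Set.finite_range _)) j
  have hle_M : ∀ j, hA.isHermitian.eigenvalues j ≤ Mx :=
    fun j => le_ciSup (Set.Finite.bddAbove (Set.finite_range _)) j
  have hm0 : 0 ≤ m := le_ciInf fun j => hA.eigenvalues_nonneg j
  have hM0 : 0 ≤ Mx :=
    le_trans (hA.eigenvalues_nonneg (Classical.arbitrary _)) (hle_M _)
  have hAm : (A - m • 1).PosSemidef := psd_sub_smul hA.isHermitian hm_le
  have hMA : (Mx • 1 - A).PosSemidef := psd_smul_sub hA.isHermitian hle_M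
  have hdiag_lo : ∀ j, m ≤ A j j := fun j => by
    have := psd_diag_nonneg hAm j
    simp only [Matrix.sub_apply, Matrix.smul_apply, Matrix.one_apply_eq, smul_eq_mul,
      mul_one, sub_nonneg] at this
    exact this
  have hdiag_hi : ∀ j, A j j ≤ Mx := fun j => by
    have := psd_diag_nonneg hMA j
    simp only [Matrix.sub_apply, Matrix.smul_apply, Matrix.one_apply_eq, smul_eq_mul,
      mul_one, sub_nonneg] at this
    exact this
  have hdiag0 : ∀ j, 0 ≤ A j j := fun j => le_trans hm0 (hdiag_lo j)
  have hδ_le : ∀ j, δ ≤ A j j - p.eval (A j j) :=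
    fun j => ciInf_le (Set.Finite.bddBelow (Set.finite_range _)) j
  set g : ℕ → ℝ := fun i => if 0 < p.coeff i then p.coeff i * m ^ i else p.coeff i * Mx ^ i
    with hg_def
  have heval : ∀ x : ℝ, p.eval x = ∑ i ∈ p.support, p.coeff i * x ^ i := fun x => by
    rw [Polynomial.eval_eq_sum, Polynomial.sum_def]
  have hsum_g : polyPosPart p m - polyNegPart p Mx = ∑ i ∈ p.support, g i := by
    rw [polyPosPart, polyNegPart, sub_neg_eq_add, ← Finset.sum_add_distrib]
    refine Finset.sum_congr rfl fun i hi => ?_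
    have hne : p.coeff i ≠ 0 := Polynomial.mem_support_iff.mp hi
    by_cases hpos : 0 < p.coeff i
    · have : ¬ p.coeff i < 0 := by linarith
      simp [hg_def, hpos, this]
    · have hneg : p.coeff i < 0 := lt_of_le_of_ne (not_lt.mp hpos) hne
      simp [hg_def, hpos, hneg]
  set c := polyPosPart p m - polyNegPart p Mx + δ with hc_def
  set S := offDiagApply p.eval A with hS_def
  have hdecomp : S - c • 1 =
      Matrix.diagonal (fun j => (A j j - p.eval (A j j)) - δ) +
      ∑ i ∈ p.support, (p.coeff i • hadPow A i - g i • 1) := by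
    ext j k
    rw [Matrix.add_apply, Matrix.sum_apply]
    by_cases h : j = k
    · subst h
      simp only [Matrix.sub_apply, Matrix.smul_apply, Matrix.one_apply_eq, smul_eq_mul,
        mul_one, Matrix.diagonal_apply_eq, hS_def, offDiagApply, Matrix.of_apply, if_pos rfl,
        hadPow]
      rw [Finset.sum_sub_distrib]
      have : ∑ x ∈ p.support, p.coeff x * A j j ^ x = p.eval (A j j) := (heval _).symm
      rw [this, ← hsum_g, hc_def]
      simp only [if_true]
      ring
    · simp only [Matrix.sub_apply, Matrix.smul_apply, Matrix.one_apply_ne h, smul_eq_mul,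
        mul_zero, sub_zero, Matrix.diagonal_apply_ne _ h, hS_def, offDiagApply,
        Matrix.of_apply, if_neg h, hadPow, zero_add]
      exact heval _
  have hterm : ∀ i ∈ p.support, (p.coeff i • hadPow A i - g i • 1).PosSemidef := by
    intro i hi
    have hne : p.coeff i ≠ 0 := Polynomial.mem_support_iff.mp hi
    have hi1 : 1 ≤ i := by
      rcases Nat.eq_zero_or_pos i with h0 | h
      · exact absurd (h0 ▸ hp0) hne
      · exact h
    by_cases hpos : 0 < p.coeff i
    · have : p.coeff i • hadPow A i - g i • (1 : Matrix (Fin n) (Fin n) ℝ)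
          = p.coeff i • (hadPow A i - m ^ i • 1) := by
        rw [smul_sub, smul_smul, hg_def]
        simp [hpos]
      rw [this]
      exact psd_smul (hadPow_lower hA hm0 hAm hdiag_lo i hi1) hpos.le
    · have hneg : p.coeff i < 0 := lt_of_le_of_ne (not_lt.mp hpos) hne
      have : p.coeff i • hadPow A i - g i • (1 : Matrix (Fin n) (Fin n) ℝ)
          = (-p.coeff i) • (Mx ^ i • 1 - hadPow A i) := by
        rw [smul_sub, smul_smul, hg_def]
        simp [hpos]
        module
      rw [this]
      exact psd_smul (hadPow_upper hA hM0 hMA hdiag_hi hdiag0 i hi1) (by linarith)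
  have hpsd : (S - c • 1).PosSemidef := by
    rw [hdecomp]
    exact (Matrix.posSemidef_diagonal_iff.mpr fun j => sub_nonneg.mpr (hδ_le j)).add
      (psd_sum hterm)
  exact eig_ge_of_psd hS hpsd i
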